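/- A right Serre functor on a k-linear category with finite-dimensional Hom-spaces is fully faithful. -/
import Mathlib


open CategoryTheory

universe v u

/-- A right Serre functor on a `k`-linear category `C`: an endofunctor `S`
together with isomorphisms `C(X, S Y) ≅ C(Y, X)^*`, natural in both variables. -/
structure RightSerreData (k : Type*) [Field k]
    (C : Type u) [Category.{v} C] [Preadditive C] [Linear k C] where
  S : C ⥤ C
  η : ∀ X Y : C, (X ⟶ S.obj Y) ≃ₗ[k] Module.Dual k (Y ⟶ X)
  nat_left : ∀ {X X' Y : C} (f : X' ⟶ X) (φ : X ⟶ S.obj Y) (g : Y ⟶ X'),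
    η X' Y (f ≫ φ) g = η X Y φ (g ≫ f)
  nat_right : ∀ {X Y Y' : C} (g : Y ⟶ Y') (φ : X ⟶ S.obj Y) (h : Y' ⟶ X),
    η X Y' (φ ≫ S.map g) h = η X Y φ (g ≫ h)

/-- A right Serre functor on a `k`-linear category with finite-dimensional
Hom-spaces is fully faithful. -/
theorem rightSerre_fully_faithful (k : Type*) [Field k]
    (C : Type u) [Category.{v} C] [Preadditive C] [Linear k C]
    (hfin : ∀ X Y : C, FiniteDimensional k (X ⟶ Y))
    (S : RightSerreData k C) :
    S.S.Full ∧ S.S.Faithful := by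
  -- The key computation: η (S X) Y (S.map f) g = η Y X g f
  have key : ∀ {X Y : C} (f : X ⟶ Y) (g : Y ⟶ S.S.obj X),
      S.η (S.S.obj X) Y (S.S.map f) g = S.η Y X g f := by
    intro X Y f g
    have h1 := S.nat_right f (𝟙 (S.S.obj X)) g
    have h2 := S.nat_left g (𝟙 (S.S.obj X)) f
    simp only [Category.id_comp, Category.comp_id] at h1 h2
    rw [h1, h2]
  -- The flip equiv Φ : (X ⟶ Y) ≃ₗ Dual (Y ⟶ S X)
  have main : ∀ X Y : C, Function.Bijective (S.S.map : (X ⟶ Y) → (S.S.obj X ⟶ S.S.obj Y)) := by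
    intro X Y
    haveI := hfin X Y
    let Φ : (X ⟶ Y) ≃ₗ[k] Module.Dual k (Y ⟶ S.S.obj X) :=
      (Module.evalEquiv k (X ⟶ Y)).trans (S.η Y X).dualMap
    have hΦ : ∀ (f : X ⟶ Y) (g : Y ⟶ S.S.obj X), Φ f g = S.η Y X g f := by
      intro f g
      simp [Φ, Module.evalEquiv, Module.Dual.eval]
    have hS : ∀ f : X ⟶ Y, S.S.map f = (S.η (S.S.obj X) Y).symm (Φ f) := by
      intro f
      apply (S.η (S.S.obj X) Y).injective
      rw [LinearEquiv.apply_symm_apply]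
      ext g
      rw [key f g, hΦ]
    have : (S.S.map : (X ⟶ Y) → (S.S.obj X ⟶ S.S.obj Y)) =
        (S.η (S.S.obj X) Y).symm ∘ Φ := by
      funext f; exact hS f
    rw [this]
    exact (S.η (S.S.obj X) Y).symm.bijective.comp Φ.bijective
  constructor
  · exact ⟨fun {X Y} φ => ⟨(main X Y).2 φ |>.choose, (main X Y).2 φ |>.choose_spec⟩⟩
  · exact ⟨fun {X Y} f g h => (main X Y).1 h⟩
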